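/- Let (X, 𝔉, P) be a probability space and let T, S : X → X be measurable maps that preserve P (i.e., P∘T⁻¹ = P and P∘S⁻¹ = P). Then for every bounded measurable f : X → ℝ, for P-almost every x ∈ X the Birkhoff limits f_*(x) := lim_{n→∞} (1/n) ∑_{i=1}^{n} f(Sⁱ x) and f_{**}(x) := lim_{n→∞} (1/n) ∑_{j=1}^{n} f_*(Tʲ x) exist, and the double Cesàro average (1/n) ∑_{j=1}^{n} (1/n) ∑_{i=1}^{n} f(Sⁱ Tʲ x) converges to f_{**}(x) as n → ∞. -/

import Mathlib

open MeasureTheory Filter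

namespace TwoDB

variable {X : Type*} [MeasurableSpace X]

/-- Birkhoff sums. -/
noncomputable def bS (T : X → X) (g : X → ℝ) (n : ℕ) (x : X) : ℝ :=
  ∑ i ∈ Finset.range n, g (T^[i] x)

lemma bS_succ (T : X → X) (g : X → ℝ) (n : ℕ) (x : X) :
    bS T g (n + 1) x = g x + bS T g n (T x) := by
  simp only [bS, Finset.sum_range_succ', Function.iterate_succ_apply,
    Function.iterate_zero_apply]
  exact add_comm _ _

lemma bS_measurable {T : X → X} (hT : Measurable T) {g : X → ℝ} (hg : Measurable g) (n : ℕ) :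
    Measurable (bS T g n) := by
  apply Finset.measurable_sum
  exact fun i _ => hg.comp (hT.iterate i)

lemma abs_bS_le {T : X → X} {g : X → ℝ} {C : ℝ} (hC : ∀ x, |g x| ≤ C) (n : ℕ) (x : X) :
    |bS T g n x| ≤ n * C := by
  calc |bS T g n x| ≤ ∑ i ∈ Finset.range n, |g (T^[i] x)| := Finset.abs_sum_le_sum_abs _ _
    _ ≤ ∑ _i ∈ Finset.range n, C := Finset.sum_le_sum fun i _ => hC _
    _ = n * C := by simp [mul_comm]

variable (P : Measure X) [IsProbabilityMeasure P]

lemma integrable_of_bound {g : X → ℝ} (hg : Measurable g) (C : ℝ) (hC : ∀ x, |g x| ≤ C) :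
    Integrable g P :=
  (integrable_const C).mono' hg.aestronglyMeasurable (Eventually.of_forall hC)

lemma integral_comp_mp {T : X → X} (hT : MeasurePreserving T P P) {g : X → ℝ}
    (hg : Measurable g) : ∫ x, g (T x) ∂P = ∫ x, g x ∂P := by
  calc ∫ x, g (T x) ∂P = ∫ y, g y ∂(Measure.map T P) :=
        (integral_map hT.measurable.aemeasurable
          (by rw [hT.map_eq]; exact hg.aestronglyMeasurable)).symm
    _ = ∫ y, g y ∂P := by rw [hT.map_eq]

/-- The maximal ergodic theorem (Garsia's proof). -/
theorem maximal_ergodic {T : X → X} (hT : MeasurePreserving T P P)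
    {g : X → ℝ} (hg : Measurable g) {C : ℝ} (hC : ∀ x, |g x| ≤ C) :
    0 ≤ ∫ x in {x | ∃ n, 0 < bS T g n x}, g x ∂P := by
  -- the maximal functions
  set M : ℕ → X → ℝ := fun n => Nat.rec (fun _ => (0 : ℝ))
    (fun _ Mn x => max 0 (g x + Mn (T x))) n with hM
  have hM0 : ∀ x, M 0 x = 0 := fun _ => rfl
  have hMs : ∀ n x, M (n + 1) x = max 0 (g x + M n (T x)) := fun _ _ => rfl
  have hMmeas : ∀ n, Measurable (M n) := by
    intro n; induction n with
    | zero => exact measurable_const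
    | succ n ih =>
      have : M (n + 1) = fun x => max 0 (g x + M n (T x)) := rfl
      rw [this]
      exact measurable_const.max (hg.add (ih.comp hT.measurable))
  have hMnonneg : ∀ n x, 0 ≤ M n x := by
    intro n x; cases n with
    | zero => simp [hM0]
    | succ n => simp [hMs]
  have hMbound : ∀ n x, M n x ≤ n * C := by
    intro n; induction n with
    | zero => intro x; simp [hM0]
    | succ n ih =>
      intro x
      have hC0 : 0 ≤ C := (abs_nonneg _).trans (hC x)
      have : g x + M n (T x) ≤ C + n * C := by
        have := (abs_le.1 (hC x)).2
        have := ih (T x)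
        linarith
      simp only [hMs]
      refine max_le (by positivity) (this.trans (by push_cast; ring_nf; exact le_refl _))
  have hMabs : ∀ n x, |M n x| ≤ n * C := fun n x =>
    abs_le.2 ⟨by nlinarith [hMnonneg n x, hMbound n x], hMbound n x⟩
  have hMint : ∀ n, Integrable (M n) P := fun n =>
    integrable_of_bound P (hMmeas n) _ (hMabs n)
  have hMmono : ∀ n x, M n x ≤ M (n + 1) x := by
    intro n; induction n with
    | zero => intro x; simp [hM0, hMnonneg]
    | succ n ih =>
      intro x
      simp only [hMs]
      exact max_le_max le_rfl (by linarith [ih (T x)])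
  have hMgeS : ∀ n k, k ≤ n → ∀ x, bS T g k x ≤ M n x := by
    intro n; induction n with
    | zero =>
      intro k hk x; interval_cases k; simp [bS, hM0]
    | succ n ih =>
      intro k hk x
      cases k with
      | zero => simpa [bS] using hMnonneg (n + 1) x
      | succ k =>
        rw [bS_succ]
        have := ih k (Nat.succ_le_succ_iff.1 hk) (T x)
        rw [hMs]
        exact le_max_of_le_right (by linarith)
  -- key integral inequality on A n := {0 < M n}
  have hAmeas : ∀ n, MeasurableSet {x | 0 < M n x} :=
    fun n => measurableSet_lt measurable_const (hMmeas n)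
  have hgint : Integrable g P := integrable_of_bound P hg C hC
  have hkey : ∀ n, 0 ≤ ∫ x in {x | 0 < M n x}, g x ∂P := by
    intro n
    cases n with
    | zero =>
      have : {x | 0 < M 0 x} = ∅ := by ext x; simp [hM0]
      simp [this]
    | succ n =>
      set A := {x | 0 < M (n + 1) x} with hA
      have hAm : MeasurableSet A := hAmeas (n + 1)
      have step1 : ∫ x in A, g x ∂P = ∫ x in A, (M (n + 1) x - M n (T x)) ∂P := by
        refine setIntegral_congr_fun hAm (fun x hx => ?_)
        have hx' : 0 < M (n + 1) x := hx
        rw [hMs] at hx' ⊢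
        rcases max_choice 0 (g x + M n (T x)) with h | h
        · rw [h] at hx'; exact absurd hx' (lt_irrefl 0)
        · rw [h]; ring
      have hMTint : Integrable (fun x => M n (T x)) P :=
        integrable_of_bound P ((hMmeas n).comp hT.measurable) _ (fun x => hMabs n (T x))
      have step2 : ∫ x in A, (M (n + 1) x - M n (T x)) ∂P
          = ∫ x in A, M (n + 1) x ∂P - ∫ x in A, M n (T x) ∂P :=
        integral_sub ((hMint (n + 1)).integrableOn) (hMTint.integrableOn)
      have step3 : ∫ x in A, M (n + 1) x ∂P = ∫ x, M (n + 1) x ∂P := by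
        refine setIntegral_eq_integral_of_forall_compl_eq_zero (fun x hx => ?_)
        have : ¬ 0 < M (n + 1) x := hx
        exact le_antisymm (not_lt.1 this) (hMnonneg (n + 1) x)
      have step4 : ∫ x in A, M n (T x) ∂P ≤ ∫ x, M n (T x) ∂P :=
        setIntegral_le_integral hMTint (Eventually.of_forall (fun x => hMnonneg n (T x)))
      have step5 : ∫ x, M n (T x) ∂P = ∫ x, M n x ∂P := integral_comp_mp P hT (hMmeas n)
      have step6 : ∫ x, M n x ∂P ≤ ∫ x, M (n + 1) x ∂P :=
        integral_mono (hMint n) (hMint (n + 1)) (fun x => hMmono n x)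
      rw [step1, step2, step3]
      linarith
  -- pass to the limit
  set U := {x | ∃ n, 0 < bS T g n x} with hU
  have hUmeas : MeasurableSet U := by
    have : U = ⋃ n, {x | 0 < bS T g n x} := by ext x; simp [hU]
    rw [this]
    exact MeasurableSet.iUnion fun n =>
      measurableSet_lt measurable_const (bS_measurable hT.measurable hg n)
  have hUeq : U = ⋃ n, {x | 0 < M n x} := by
    ext x
    simp only [hU, Set.mem_setOf_eq, Set.mem_iUnion]
    constructor
    · rintro ⟨n, hn⟩
      exact ⟨n, lt_of_lt_of_le hn (hMgeS n n le_rfl x)⟩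
    · rintro ⟨n, hn⟩
      -- M n x > 0 implies some Birkhoff sum is positive
      have key : ∀ m y, ∃ k, M m y ≤ bS T g k y := by
        intro m; induction m with
        | zero => intro y; exact ⟨0, by simp [hM0, bS]⟩
        | succ m ih =>
          intro y
          rcases max_choice 0 (g y + M m (T y)) with h | h
          · exact ⟨0, by rw [hMs, h]; simp [bS]⟩
          · obtain ⟨k, hk⟩ := ih (T y)
            exact ⟨k + 1, by rw [hMs, h, bS_succ]; linarith⟩
      obtain ⟨k, hk⟩ := key n x
      exact ⟨k, lt_of_lt_of_le hn hk⟩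
  -- indicator convergence
  have hmono' : ∀ n m, n ≤ m → ∀ x, M n x ≤ M m x := by
    intro n m hnm
    induction hnm with
    | refl => intro x; exact le_rfl
    | step _ ih => intro x; exact (ih x).trans (hMmono _ x)
  have htendsto : Tendsto (fun n => ∫ x in {x | 0 < M n x}, g x ∂P) atTop
      (nhds (∫ x in U, g x ∂P)) := by
    have hrw : ∀ n, ∫ x in {x | 0 < M n x}, g x ∂P
        = ∫ x, ({x | 0 < M n x}).indicator g x ∂P :=
      fun n => (integral_indicator (hAmeas n)).symm
    have hrwU : ∫ x in U, g x ∂P = ∫ x, U.indicator g x ∂P :=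
      (integral_indicator hUmeas).symm
    simp only [hrw, hrwU]
    refine tendsto_integral_of_dominated_convergence (fun _ => C)
      (fun n => (hg.indicator (hAmeas n)).aestronglyMeasurable)
      (integrable_const C) (fun n => Eventually.of_forall (fun x => ?_))
      (Eventually.of_forall (fun x => ?_))
    · rw [Real.norm_eq_abs]
      rcases Set.indicator_eq_zero_or_self {x | 0 < M n x} g x with h | h <;> rw [h]
      · simpa using (abs_nonneg (g x)).trans (hC x)
      · simpa using hC x
    · by_cases hx : x ∈ U
      · rw [Set.indicator_of_mem hx]
        rw [hUeq] at hx
        obtain ⟨n₀, hn₀⟩ := Set.mem_iUnion.1 hx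
        refine tendsto_const_nhds.congr' ?_
        filter_upwards [eventually_ge_atTop n₀] with n hn
        exact (Set.indicator_of_mem
          (show x ∈ {x | 0 < M n x} from lt_of_lt_of_le hn₀ (hmono' n₀ n hn x)) g).symm
      · have hx' : ∀ n, x ∉ {x | 0 < M n x} := by
          intro n hmem
          exact hx (by rw [hUeq]; exact Set.mem_iUnion.2 ⟨n, hmem⟩)
        rw [Set.indicator_of_notMem hx]
        simpa only [Set.indicator_of_notMem (hx' _)] using tendsto_const_nhds
  exact ge_of_tendsto' htendsto hkey

lemma real_le_of_forall_pos {a b : ℝ} (h : ∀ ε : ℝ, 0 < ε → a ≤ b + ε) : a ≤ b := by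
  by_contra hlt
  push_neg at hlt
  have := h ((a - b) / 2) (by linarith)
  linarith

lemma limsup_le_limsup_of_sub {u v : ℕ → ℝ} {Cu Cv : ℝ}
    (h : Tendsto (fun n => u n - v n) atTop (nhds 0))
    (huC : ∀ n, |u n| ≤ Cu) (hvC : ∀ n, |v n| ≤ Cv) :
    limsup u atTop ≤ limsup v atTop := by
  have hu_le : IsBoundedUnder (· ≤ ·) atTop u := isBoundedUnder_of ⟨Cu, fun n => (abs_le.1 (huC n)).2⟩
  have hu_ge : IsBoundedUnder (· ≥ ·) atTop u := isBoundedUnder_of ⟨-Cu, fun n => (abs_le.1 (huC n)).1⟩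
  have hv_le : IsBoundedUnder (· ≤ ·) atTop v := isBoundedUnder_of ⟨Cv, fun n => (abs_le.1 (hvC n)).2⟩
  have hv_ge : IsBoundedUnder (· ≥ ·) atTop v := isBoundedUnder_of ⟨-Cv, fun n => (abs_le.1 (hvC n)).1⟩
  refine real_le_of_forall_pos (fun ε hε => ?_)
  have hev : ∀ᶠ n in atTop, u n ≤ v n + ε := by
    filter_upwards [(Metric.tendsto_nhds.1 h) ε hε] with n hn
    rw [Real.dist_eq, sub_zero] at hn
    linarith [(abs_lt.1 hn).2]
  calc limsup u atTop ≤ limsup (fun n => v n + ε) atTop :=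
        limsup_le_limsup hev hu_ge.isCoboundedUnder_le
          (isBoundedUnder_of ⟨Cv + ε, fun n => by have := (abs_le.1 (hvC n)).2; linarith⟩)
    _ = limsup v atTop + ε := limsup_add_const atTop v ε hv_le hv_ge.isCoboundedUnder_le

lemma limsup_eq_of_sub_tendsto {u v : ℕ → ℝ} {Cu Cv : ℝ}
    (h : Tendsto (fun n => u n - v n) atTop (nhds 0))
    (huC : ∀ n, |u n| ≤ Cu) (hvC : ∀ n, |v n| ≤ Cv) :
    limsup u atTop = limsup v atTop := by
  have h' : Tendsto (fun n => v n - u n) atTop (nhds 0) := by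
    have := h.neg
    simpa using this
  exact le_antisymm (limsup_le_limsup_of_sub h huC hvC) (limsup_le_limsup_of_sub h' hvC huC)

lemma liminf_le_liminf_of_sub {u v : ℕ → ℝ} {Cu Cv : ℝ}
    (h : Tendsto (fun n => u n - v n) atTop (nhds 0))
    (huC : ∀ n, |u n| ≤ Cu) (hvC : ∀ n, |v n| ≤ Cv) :
    liminf u atTop ≤ liminf v atTop := by
  have hu_le : IsBoundedUnder (· ≤ ·) atTop u := isBoundedUnder_of ⟨Cu, fun n => (abs_le.1 (huC n)).2⟩
  have hu_ge : IsBoundedUnder (· ≥ ·) atTop u := isBoundedUnder_of ⟨-Cu, fun n => (abs_le.1 (huC n)).1⟩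
  have hv_ge : IsBoundedUnder (· ≥ ·) atTop v := isBoundedUnder_of ⟨-Cv, fun n => (abs_le.1 (hvC n)).1⟩
  refine real_le_of_forall_pos (fun ε hε => ?_)
  have hev : ∀ᶠ n in atTop, u n ≤ v n + ε := by
    filter_upwards [(Metric.tendsto_nhds.1 h) ε hε] with n hn
    rw [Real.dist_eq, sub_zero] at hn
    linarith [(abs_lt.1 hn).2]
  have hv_le : IsBoundedUnder (· ≤ ·) atTop v := isBoundedUnder_of ⟨Cv, fun n => (abs_le.1 (hvC n)).2⟩
  calc liminf u atTop ≤ liminf (fun n => v n + ε) atTop :=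
        liminf_le_liminf hev hu_ge
          ((isBoundedUnder_of ⟨Cv + ε, fun n => (by have := (abs_le.1 (hvC n)).2; linarith :
              v n + ε ≤ Cv + ε)⟩ : IsBoundedUnder (· ≤ ·) atTop
              fun n => v n + ε)).isCoboundedUnder_ge
    _ = liminf v atTop + ε := liminf_add_const atTop v ε hv_le.isCoboundedUnder_ge hv_ge

lemma liminf_eq_of_sub_tendsto {u v : ℕ → ℝ} {Cu Cv : ℝ}
    (h : Tendsto (fun n => u n - v n) atTop (nhds 0))
    (huC : ∀ n, |u n| ≤ Cu) (hvC : ∀ n, |v n| ≤ Cv) :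
    liminf u atTop = liminf v atTop := by
  have h' : Tendsto (fun n => v n - u n) atTop (nhds 0) := by
    have := h.neg; simpa using this
  exact le_antisymm (liminf_le_liminf_of_sub h huC hvC) (liminf_le_liminf_of_sub h' hvC huC)

/-- Birkhoff's pointwise ergodic theorem for bounded measurable functions. -/
theorem birkhoff_core {T : X → X} (hT : MeasurePreserving T P P)
    {f : X → ℝ} (hf : Measurable f) {C : ℝ} (hC : ∀ x, |f x| ≤ C) :
    ∃ F : X → ℝ, Measurable F ∧ (∀ x, |F x| ≤ C) ∧ (∀ x, F (T x) = F x) ∧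
      ((∀ x, 0 ≤ f x) → ∀ x, 0 ≤ F x) ∧
      (∫ x, F x ∂P = ∫ x, f x ∂P) ∧
      ∀ᵐ x ∂P, Tendsto (fun n : ℕ => (n : ℝ)⁻¹ * bS T f n x) atTop (nhds (F x)) := by
  set A : ℕ → X → ℝ := fun n x => (n : ℝ)⁻¹ * bS T f n x with hA
  have hAmeas : ∀ n, Measurable (A n) :=
    fun n => (bS_measurable hT.measurable hf n).const_mul _
  have habs : ∀ n x, |A n x| ≤ C := by
    intro n x
    have hC0 : 0 ≤ C := (abs_nonneg _).trans (hC x)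
    calc |A n x| = (n : ℝ)⁻¹ * |bS T f n x| := by
          simp only [hA]
          rw [abs_mul, abs_inv, Nat.abs_cast]
      _ ≤ (n : ℝ)⁻¹ * (n * C) :=
          mul_le_mul_of_nonneg_left (abs_bS_le hC n x) (by positivity)
      _ ≤ C := by
          cases n with
          | zero => simpa using hC0
          | succ n =>
            rw [inv_mul_cancel_left₀ (by exact_mod_cast (Nat.succ_ne_zero n) : ((n+1 : ℕ) : ℝ) ≠ 0)]
  have hble : ∀ x, IsBoundedUnder (· ≤ ·) atTop (fun n => A n x) :=
    fun x => isBoundedUnder_of ⟨C, fun n => (abs_le.1 (habs n x)).2⟩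
  have hbge : ∀ x, IsBoundedUnder (· ≥ ·) atTop (fun n => A n x) :=
    fun x => isBoundedUnder_of ⟨-C, fun n => (abs_le.1 (habs n x)).1⟩
  set F : X → ℝ := fun x => limsup (fun n => A n x) atTop with hF
  set Fl : X → ℝ := fun x => liminf (fun n => A n x) atTop with hFl
  have hFmeas : Measurable F := Measurable.limsup (fun n => hAmeas n)
  have hFlmeas : Measurable Fl := Measurable.liminf (fun n => hAmeas n)
  have hFabs : ∀ x, |F x| ≤ C := fun x => abs_le.2
    ⟨le_limsup_of_frequently_le (Frequently.of_forall fun n => (abs_le.1 (habs n x)).1) (hble x),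
     limsup_le_of_le (hbge x).isCoboundedUnder_le
       (Eventually.of_forall fun n => (abs_le.1 (habs n x)).2)⟩
  have hFnonneg : (∀ x, 0 ≤ f x) → ∀ x, 0 ≤ F x := by
    intro hfpos x
    have hApos : ∀ n, 0 ≤ A n x := by
      intro n
      refine mul_nonneg (by positivity) (Finset.sum_nonneg fun i _ => hfpos _)
    exact le_limsup_of_frequently_le (Frequently.of_forall hApos) (hble x)
  -- shift by one step
  have hdiff : ∀ x, Tendsto (fun n => A n (T x) - A (n + 1) x) atTop (nhds 0) := by
    intro x
    have hC0 : 0 ≤ C := (abs_nonneg _).trans (hC x)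
    refine tendsto_zero_iff_norm_tendsto_zero.mpr
      (squeeze_zero (g := fun n : ℕ => 2 * C / ((n : ℝ) + 1)) (fun n => norm_nonneg _)
        (fun n => ?_) ?_)
    · have hBabs : |bS T f n (T x)| ≤ n * C := abs_bS_le hC n (T x)
      have hrec : A (n + 1) x = ((n : ℝ) + 1)⁻¹ * (f x + bS T f n (T x)) := by
        simp only [hA]; push_cast; rw [bS_succ]
      rw [Real.norm_eq_abs, hrec]
      simp only [hA]
      cases n with
      | zero =>
        have h1 : |f x| ≤ 2 * C := by linarith [hC x]
        simpa [bS] using h1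
      | succ m =>
        set nn : ℝ := ((m : ℝ) + 1) with hnn
        have hnnpos : 0 < nn := by positivity
        set B := bS T f (m + 1) (T x) with hB
        have hBabs' : |B| ≤ nn * C := by
          have h := abs_bS_le (T := T) hC (m + 1) (T x)
          rw [← hB] at h
          push_cast at h
          rw [hnn]
          exact h
        have hexp : (((m + 1 : ℕ) : ℝ))⁻¹ * B - (((m + 1 : ℕ) : ℝ) + 1)⁻¹ * (f x + B)
            = (B - nn * f x) / (nn * (nn + 1)) := by
          push_cast
          rw [hnn]
          field_simp
          ring
        rw [hexp, abs_div, abs_of_pos (by positivity : (0:ℝ) < nn * (nn + 1))]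
        rw [div_le_div_iff₀ (by positivity) (by positivity : (0:ℝ) < ((m + 1 : ℕ) : ℝ) + 1)]
        have h1 : |B - nn * f x| ≤ 2 * nn * C := by
          calc |B - nn * f x| ≤ |B| + nn * |f x| := by
                have := abs_sub (B) (nn * f x)
                calc |B - nn * f x| ≤ |B| + |nn * f x| := abs_sub _ _
                  _ = |B| + nn * |f x| := by rw [abs_mul, abs_of_pos hnnpos]
            _ ≤ nn * C + nn * C := add_le_add hBabs' (mul_le_mul_of_nonneg_left (hC x) hnnpos.le)
            _ = 2 * nn * C := by ring
        have hcast : ((m + 1 : ℕ) : ℝ) + 1 = nn + 1 := by push_cast; rw [hnn]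
        rw [hcast]
        nlinarith [hnnpos, hC0, h1, mul_le_mul_of_nonneg_right h1 hnnpos.le]
    · have h := tendsto_one_div_add_atTop_nhds_zero_nat.const_mul (2 * C)
      simpa [div_eq_mul_inv] using h
  have hFT : ∀ x, F (T x) = F x := by
    intro x
    have h1 : limsup (fun n => A n (T x)) atTop = limsup (fun n => A (n + 1) x) atTop :=
      limsup_eq_of_sub_tendsto (hdiff x) (fun n => habs n (T x)) (fun n => habs (n + 1) x)
    have h2 : limsup (fun n => A (n + 1) x) atTop = limsup (fun n => A n x) atTop :=
      limsup_nat_add (fun n => A n x) 1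
    exact h1.trans h2
  have hFlT : ∀ x, Fl (T x) = Fl x := by
    intro x
    have h1 : liminf (fun n => A n (T x)) atTop = liminf (fun n => A (n + 1) x) atTop :=
      liminf_eq_of_sub_tendsto (hdiff x) (fun n => habs n (T x)) (fun n => habs (n + 1) x)
    have h2 : liminf (fun n => A (n + 1) x) atTop = liminf (fun n => A n x) atTop :=
      liminf_nat_add (fun n => A n x) 1
    exact h1.trans h2
  -- null sets
  have hnull : ∀ q r : ℚ, (q : ℝ) < r → P {x | Fl x < q ∧ (r : ℝ) < F x} = 0 := by
    intro q r hqr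
    set E := {x | Fl x < (q : ℝ) ∧ (r : ℝ) < F x} with hE
    have hEmeas : MeasurableSet E :=
      (measurableSet_lt hFlmeas measurable_const).inter
        (measurableSet_lt measurable_const hFmeas)
    have hEinv : ∀ x, x ∈ E ↔ T x ∈ E := by
      intro x
      simp only [hE, Set.mem_setOf_eq, hFT, hFlT]
    have hEiter : ∀ k x, x ∈ E ↔ T^[k] x ∈ E := by
      intro k
      induction k with
      | zero => intro x; simp
      | succ k ih =>
        intro x
        rw [Function.iterate_succ_apply]
        exact (hEinv x).trans (ih (T x))
    have hfint : Integrable f P := integrable_of_bound P hf C hC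
    have hmE : (0:ℝ) ≤ (P E).toReal := ENNReal.toReal_nonneg
    -- upper bound part : r * m ≤ ∫_E f
    have hupper : (r : ℝ) * (P E).toReal ≤ ∫ x in E, f x ∂P := by
      set g := E.indicator (fun x => f x - r) with hg
      have hgmeas : Measurable g := (hf.sub measurable_const).indicator hEmeas
      have hgabs : ∀ x, |g x| ≤ C + |(r : ℝ)| := by
        intro x
        have hC0 : 0 ≤ C := (abs_nonneg _).trans (hC x)
        by_cases hx : x ∈ E
        · rw [hg, Set.indicator_of_mem hx]
          calc |f x - r| ≤ |f x| + |(r:ℝ)| := abs_sub _ _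
            _ ≤ C + |(r:ℝ)| := by linarith [hC x]
        · rw [hg, Set.indicator_of_notMem hx]
          simp; positivity
      have hbSg : ∀ n x, x ∈ E → bS T g n x = bS T f n x - n * r := by
        intro n x hx
        have hc : ∀ i ∈ Finset.range n, g (T^[i] x) = f (T^[i] x) - r :=
          fun i _ => Set.indicator_of_mem ((hEiter i x).1 hx) _
        rw [bS, Finset.sum_congr rfl hc, Finset.sum_sub_distrib, Finset.sum_const,
          Finset.card_range, ← bS]
        simp [nsmul_eq_mul]
      have hbSg0 : ∀ n x, x ∉ E → bS T g n x = 0 := by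
        intro n x hx
        have hc : ∀ i ∈ Finset.range n, g (T^[i] x) = 0 :=
          fun i _ => Set.indicator_of_notMem (fun h => hx ((hEiter i x).2 h)) _
        rw [bS, Finset.sum_congr rfl hc, Finset.sum_const_zero]
      have hUg : {x | ∃ n, 0 < bS T g n x} = E := by
        ext x
        constructor
        · rintro ⟨n, hn⟩
          by_contra hx
          rw [hbSg0 n x hx] at hn
          exact lt_irrefl 0 hn
        · intro hx
          have hfreq : ∃ᶠ n in atTop, (r : ℝ) < A n x :=
            frequently_lt_of_lt_limsup ((hbge x).isCoboundedUnder_le) hx.2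
          obtain ⟨n, hn1, hn2⟩ := (frequently_atTop.1 hfreq) 1
          refine ⟨n, ?_⟩
          rw [hbSg n x hx]
          have hn0 : (0 : ℝ) < n := by exact_mod_cast hn1
          have hmul : (n : ℝ) * r < (n : ℝ) * A n x := mul_lt_mul_of_pos_left hn2 hn0
          have hid : (n : ℝ) * A n x = bS T f n x := by
            simp only [hA]; rw [← mul_assoc, mul_inv_cancel₀ hn0.ne', one_mul]
          linarith
      have h1 := maximal_ergodic P hT hgmeas hgabs
      rw [hUg] at h1
      have hEg : ∫ x in E, g x ∂P = ∫ x in E, (f x - (r : ℝ)) ∂P :=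
        setIntegral_congr_fun hEmeas (fun x hx => Set.indicator_of_mem hx _)
      have hsub : ∫ x in E, (f x - (r : ℝ)) ∂P
          = ∫ x in E, f x ∂P - (P E).toReal * r := by
        rw [integral_sub hfint.integrableOn
          (integrableOn_const (measure_ne_top P E)), setIntegral_const,
          smul_eq_mul, measureReal_def]
      rw [hEg, hsub] at h1
      linarith
    -- lower bound part : ∫_E f ≤ q * m
    have hlower : ∫ x in E, f x ∂P ≤ (q : ℝ) * (P E).toReal := by
      set g := E.indicator (fun x => (q : ℝ) - f x) with hg
      have hgmeas : Measurable g := (measurable_const.sub hf).indicator hEmeas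
      have hgabs : ∀ x, |g x| ≤ C + |(q : ℝ)| := by
        intro x
        have hC0 : 0 ≤ C := (abs_nonneg _).trans (hC x)
        by_cases hx : x ∈ E
        · rw [hg, Set.indicator_of_mem hx]
          calc |(q : ℝ) - f x| ≤ |(q : ℝ)| + |f x| := abs_sub _ _
            _ ≤ C + |(q : ℝ)| := by linarith [hC x]
        · rw [hg, Set.indicator_of_notMem hx]
          simp; positivity
      have hbSg : ∀ n x, x ∈ E → bS T g n x = n * q - bS T f n x := by
        intro n x hx
        have hc : ∀ i ∈ Finset.range n, g (T^[i] x) = (q : ℝ) - f (T^[i] x) :=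
          fun i _ => Set.indicator_of_mem ((hEiter i x).1 hx) _
        rw [bS, Finset.sum_congr rfl hc, Finset.sum_sub_distrib, Finset.sum_const,
          Finset.card_range, ← bS]
        simp [nsmul_eq_mul]
      have hbSg0 : ∀ n x, x ∉ E → bS T g n x = 0 := by
        intro n x hx
        have hc : ∀ i ∈ Finset.range n, g (T^[i] x) = 0 :=
          fun i _ => Set.indicator_of_notMem (fun h => hx ((hEiter i x).2 h)) _
        rw [bS, Finset.sum_congr rfl hc, Finset.sum_const_zero]
      have hUg : {x | ∃ n, 0 < bS T g n x} = E := by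
        ext x
        constructor
        · rintro ⟨n, hn⟩
          by_contra hx
          rw [hbSg0 n x hx] at hn
          exact lt_irrefl 0 hn
        · intro hx
          have hfreq : ∃ᶠ n in atTop, A n x < (q : ℝ) :=
            frequently_lt_of_liminf_lt ((hble x).isCoboundedUnder_ge) hx.1
          obtain ⟨n, hn1, hn2⟩ := (frequently_atTop.1 hfreq) 1
          refine ⟨n, ?_⟩
          rw [hbSg n x hx]
          have hn0 : (0 : ℝ) < n := by exact_mod_cast hn1
          have hmul : (n : ℝ) * A n x < (n : ℝ) * q := mul_lt_mul_of_pos_left hn2 hn0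
          have hid : (n : ℝ) * A n x = bS T f n x := by
            simp only [hA]; rw [← mul_assoc, mul_inv_cancel₀ hn0.ne', one_mul]
          linarith
      have h1 := maximal_ergodic P hT hgmeas hgabs
      rw [hUg] at h1
      have hEg : ∫ x in E, g x ∂P = ∫ x in E, ((q : ℝ) - f x) ∂P :=
        setIntegral_congr_fun hEmeas (fun x hx => Set.indicator_of_mem hx _)
      have hsub : ∫ x in E, ((q : ℝ) - f x) ∂P
          = (P E).toReal * q - ∫ x in E, f x ∂P := by
        rw [integral_sub (integrableOn_const (measure_ne_top P E) : IntegrableOn (fun _ => (q : ℝ)) E P)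
          hfint.integrableOn, setIntegral_const, smul_eq_mul, measureReal_def]
      rw [hEg, hsub] at h1
      linarith
    -- combine
    have hm0 : (P E).toReal = 0 := by nlinarith
    rcases (ENNReal.toReal_eq_zero_iff _).1 hm0 with h | h
    · exact h
    · exact absurd h (measure_ne_top P E)
  -- almost everywhere convergence
  have hae : ∀ᵐ x ∂P, Tendsto (fun n => A n x) atTop (nhds (F x)) := by
    have h1 : ∀ᵐ x ∂P, ∀ q : ℚ, ∀ r : ℚ, (q : ℝ) < r → ¬(Fl x < q ∧ (r : ℝ) < F x) := by
      rw [ae_all_iff]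
      intro q
      rw [ae_all_iff]
      intro r
      by_cases hqr : (q : ℝ) < r
      · filter_upwards [measure_eq_zero_iff_ae_notMem.1 (hnull q r hqr)] with x hx
        exact fun _ h => hx h
      · exact Eventually.of_forall (fun x h => absurd h hqr)
    filter_upwards [h1] with x hx
    have heq : Fl x = F x := by
      refine le_antisymm (liminf_le_limsup (hble x) (hbge x)) ?_
      by_contra hlt
      push_neg at hlt
      obtain ⟨q, hq1, hq2⟩ := exists_rat_btwn hlt
      obtain ⟨r, hr1, hr2⟩ := exists_rat_btwn hq2
      exact hx q r hr1 ⟨hq1, hr2⟩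
    exact tendsto_of_liminf_eq_limsup heq rfl (hble x) (hbge x)
  -- integral equality
  have hAint : ∀ n, Integrable (A n) P :=
    fun n => integrable_of_bound P (hAmeas n) C (fun x => habs n x)
  have hint1 : Tendsto (fun n => ∫ x, A n x ∂P) atTop (nhds (∫ x, F x ∂P)) :=
    tendsto_integral_of_dominated_convergence (fun _ => C)
      (fun n => (hAmeas n).aestronglyMeasurable) (integrable_const C)
      (fun n => Eventually.of_forall fun x => by rw [Real.norm_eq_abs]; exact habs n x) hae
  have hconst : ∀ n : ℕ, 1 ≤ n → ∫ x, A n x ∂P = ∫ x, f x ∂P := by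
    intro n hn
    have hsum : ∫ x, bS T f n x ∂P = n * ∫ x, f x ∂P := by
      have : ∫ x, bS T f n x ∂P = ∑ i ∈ Finset.range n, ∫ x, f (T^[i] x) ∂P := by
        simp only [bS]
        exact integral_finset_sum _ (fun i _ =>
          integrable_of_bound P (hf.comp (hT.measurable.iterate i)) C (fun x => hC _))
      rw [this]
      have heach : ∀ i ∈ Finset.range n, ∫ x, f (T^[i] x) ∂P = ∫ x, f x ∂P :=
        fun i _ => integral_comp_mp P (hT.iterate i) hf
      rw [Finset.sum_congr rfl heach, Finset.sum_const, Finset.card_range, nsmul_eq_mul]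
    have hn0 : ((n : ℝ)) ≠ 0 := by
      have : (0:ℝ) < n := by exact_mod_cast hn
      exact this.ne'
    calc ∫ x, A n x ∂P = (n : ℝ)⁻¹ * ∫ x, bS T f n x ∂P := by
          simp only [hA]; exact integral_const_mul _ _
      _ = (n : ℝ)⁻¹ * ((n : ℝ) * ∫ x, f x ∂P) := by rw [hsum]
      _ = ∫ x, f x ∂P := inv_mul_cancel_left₀ hn0 _
  have hint2 : Tendsto (fun n => ∫ x, A n x ∂P) atTop (nhds (∫ x, f x ∂P)) := by
    refine Tendsto.congr' ?_ tendsto_const_nhds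
    filter_upwards [eventually_ge_atTop 1] with n hn
    exact (hconst n hn).symm
  exact ⟨F, hFmeas, hFabs, hFT, hFnonneg, tendsto_nhds_unique hint1 hint2, hae⟩

lemma abs_avg_le {T : X → X} {f : X → ℝ} {C : ℝ} (hC : ∀ x, |f x| ≤ C) (n : ℕ) (x : X) :
    |(n : ℝ)⁻¹ * bS T f n x| ≤ C := by
  have hC0 : 0 ≤ C := (abs_nonneg _).trans (hC x)
  calc |(n : ℝ)⁻¹ * bS T f n x| = (n : ℝ)⁻¹ * |bS T f n x| := by
        rw [abs_mul, abs_inv, Nat.abs_cast]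
    _ ≤ (n : ℝ)⁻¹ * (n * C) :=
        mul_le_mul_of_nonneg_left (abs_bS_le hC n x) (by positivity)
    _ ≤ C := by
        cases n with
        | zero => simpa using hC0
        | succ n =>
          rw [inv_mul_cancel_left₀ (by exact_mod_cast (Nat.succ_ne_zero n) : ((n+1 : ℕ) : ℝ) ≠ 0)]

lemma sum_Icc_shift (g : X → ℝ) (S : X → X) (n : ℕ) (x : X) :
    ∑ i ∈ Finset.Icc 1 n, g (S^[i] x) = bS S g n (S x) := by
  have h1 : Finset.Icc 1 n = Finset.Ico 1 (n + 1) := (Finset.Ico_add_one_right_eq_Icc 1 n).symm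
  rw [h1, Finset.sum_Ico_eq_sum_range]
  simp only [Nat.add_sub_cancel]
  refine Finset.sum_congr rfl fun i _ => ?_
  rw [show 1 + i = i + 1 from Nat.add_comm 1 i, Function.iterate_succ_apply]

/-- difference between the `n`-th shifted Birkhoff average and the limit. -/
noncomputable def df (S : X → X) (f fs : X → ℝ) (n : ℕ) (y : X) : ℝ :=
  (n : ℝ)⁻¹ * bS S f n (S y) - fs y

/-- supremum of tails of `|df|`. -/
noncomputable def Hf (S : X → X) (f fs : X → ℝ) (N : ℕ) (y : X) : ℝ :=
  (⨆ n, ENNReal.ofReal |df S f fs (N + n) y|).toReal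

lemma df_abs_le {S : X → X} {f fs : X → ℝ} {C : ℝ} (hC : ∀ x, |f x| ≤ C)
    (hCs : ∀ x, |fs x| ≤ C) (n : ℕ) (y : X) : |df S f fs n y| ≤ 2 * C := by
  calc |df S f fs n y| ≤ |(n : ℝ)⁻¹ * bS S f n (S y)| + |fs y| := abs_sub _ _
    _ ≤ C + C := add_le_add (abs_avg_le hC n (S y)) (hCs y)
    _ = 2 * C := by ring

lemma Hf_iSup_le {S : X → X} {f fs : X → ℝ} {C : ℝ} (hC : ∀ x, |f x| ≤ C)
    (hCs : ∀ x, |fs x| ≤ C) (N : ℕ) (y : X) :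
    (⨆ n, ENNReal.ofReal |df S f fs (N + n) y|) ≤ ENNReal.ofReal (2 * C) :=
  iSup_le fun n => ENNReal.ofReal_le_ofReal (df_abs_le hC hCs _ y)

lemma Hf_nonneg (S : X → X) (f fs : X → ℝ) (N : ℕ) (y : X) : 0 ≤ Hf S f fs N y :=
  ENNReal.toReal_nonneg

lemma Hf_le {S : X → X} {f fs : X → ℝ} {C : ℝ} (hC : ∀ x, |f x| ≤ C)
    (hCs : ∀ x, |fs x| ≤ C) (N : ℕ) (y : X) : Hf S f fs N y ≤ 2 * C := by
  have hC0 : 0 ≤ C := (abs_nonneg _).trans (hC y)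
  calc Hf S f fs N y ≤ (ENNReal.ofReal (2 * C)).toReal :=
        ENNReal.toReal_mono ENNReal.ofReal_ne_top (Hf_iSup_le hC hCs N y)
    _ = 2 * C := ENNReal.toReal_ofReal (by linarith)

lemma Hf_abs_le {S : X → X} {f fs : X → ℝ} {C : ℝ} (hC : ∀ x, |f x| ≤ C)
    (hCs : ∀ x, |fs x| ≤ C) (N : ℕ) (y : X) : |Hf S f fs N y| ≤ 2 * C := by
  have hC0 : 0 ≤ C := (abs_nonneg _).trans (hC y)
  exact abs_le.2 ⟨by linarith [Hf_nonneg S f fs N y], Hf_le hC hCs N y⟩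

lemma df_le_Hf {S : X → X} {f fs : X → ℝ} {C : ℝ} (hC : ∀ x, |f x| ≤ C)
    (hCs : ∀ x, |fs x| ≤ C) {N n : ℕ} (hNn : N ≤ n) (y : X) :
    |df S f fs n y| ≤ Hf S f fs N y := by
  have hne : (⨆ m, ENNReal.ofReal |df S f fs (N + m) y|) ≠ ⊤ :=
    ((Hf_iSup_le hC hCs N y).trans_lt ENNReal.ofReal_lt_top).ne
  have h1 : ENNReal.ofReal |df S f fs n y| ≤ ⨆ m, ENNReal.ofReal |df S f fs (N + m) y| := by
    have heq : N + (n - N) = n := Nat.add_sub_cancel' hNn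
    calc ENNReal.ofReal |df S f fs n y|
        = ENNReal.ofReal |df S f fs (N + (n - N)) y| := by rw [heq]
      _ ≤ _ := le_iSup (fun m => ENNReal.ofReal |df S f fs (N + m) y|) (n - N)
  have h2 := ENNReal.toReal_mono hne h1
  rwa [ENNReal.toReal_ofReal (abs_nonneg _)] at h2

lemma Hf_measurable {S : X → X} (hSm : Measurable S) {f fs : X → ℝ}
    (hf : Measurable f) (hfs : Measurable fs) (N : ℕ) : Measurable (Hf S f fs N) := by
  have hdm : ∀ n, Measurable (fun y => df S f fs n y) := fun n =>
    (((bS_measurable hSm hf n).comp hSm).const_mul _).sub hfs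
  exact (Measurable.iSup fun n => ((hdm (N + n)).abs).ennreal_ofReal).ennreal_toReal

lemma Hf_tendsto_zero {S : X → X} {f fs : X → ℝ} {y : X}
    (hy : Tendsto (fun n : ℕ => (n : ℝ)⁻¹ * bS S f n (S y)) atTop (nhds (fs y))) :
    Tendsto (fun N => Hf S f fs N y) atTop (nhds 0) := by
  rw [Metric.tendsto_atTop]
  intro ε hε
  have hy0 : Tendsto (fun n => df S f fs n y) atTop (nhds 0) := by
    have := hy.sub_const (fs y)
    simpa [df] using this
  have hev : ∀ᶠ n in atTop, |df S f fs n y| ≤ ε / 2 := by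
    filter_upwards [(Metric.tendsto_nhds.1 hy0) (ε / 2) (by linarith)] with n hn
    rw [Real.dist_eq, sub_zero] at hn
    exact le_of_lt hn
  obtain ⟨N₀, hN₀⟩ := eventually_atTop.1 hev
  refine ⟨N₀, fun N hN => ?_⟩
  rw [Real.dist_eq, sub_zero, abs_of_nonneg (Hf_nonneg S f fs N y)]
  have hle : Hf S f fs N y ≤ ε / 2 := by
    calc Hf S f fs N y ≤ (ENNReal.ofReal (ε / 2)).toReal := by
          refine ENNReal.toReal_mono ENNReal.ofReal_ne_top (iSup_le fun n => ?_)
          exact ENNReal.ofReal_le_ofReal (hN₀ (N + n) (le_trans hN (Nat.le_add_right N n)))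
      _ = ε / 2 := ENNReal.toReal_ofReal (by linarith)
  linarith

end TwoDB

open TwoDB

/-- Two-dimensional extension of Birkhoff's ergodic theorem: for two measure-preserving
maps `T, S` of a probability space and a bounded measurable `f`, almost surely the
Birkhoff limits `f_*` (for `S`), `f_**` (for `T` applied to `f_*`) exist, and the double
Cesàro average of `f (S^i (T^j x))` converges to `f_**(x)`. -/
theorem two_dimensional_birkhoff
    {X : Type*} [MeasurableSpace X] (P : Measure X) [IsProbabilityMeasure P]
    (T S : X → X) (hT : MeasurePreserving T P P) (hS : MeasurePreserving S P P)
    (f : X → ℝ) (hf : Measurable f) (hbdd : ∃ M : ℝ, ∀ x, |f x| ≤ M) :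
    ∃ fs fss : X → ℝ,
      ∀ᵐ x ∂P,
        Tendsto (fun n : ℕ => (n : ℝ)⁻¹ * ∑ i ∈ Finset.Icc 1 n, f (S^[i] x))
          atTop (nhds (fs x)) ∧
        Tendsto (fun n : ℕ => (n : ℝ)⁻¹ * ∑ j ∈ Finset.Icc 1 n, fs (T^[j] x))
          atTop (nhds (fss x)) ∧
        Tendsto (fun n : ℕ => (n : ℝ)⁻¹ * ∑ j ∈ Finset.Icc 1 n,
            (n : ℝ)⁻¹ * ∑ i ∈ Finset.Icc 1 n, f (S^[i] (T^[j] x)))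
          atTop (nhds (fss x)) := by
  classical
  obtain ⟨C, hC⟩ := hbdd
  obtain ⟨fs, hfsmeas, hfsabs, hfsinv, -, hfsint, hfsae⟩ := birkhoff_core P hS hf hC
  obtain ⟨fss, hfssmeas, hfssabs, hfssinv, -, hfssint, hfssae⟩ :=
    birkhoff_core P hT hfsmeas hfsabs
  refine ⟨fs, fss, ?_⟩
  -- a.e. convergence statements, pulled back one step
  have hconv1 : ∀ᵐ x ∂P,
      Tendsto (fun n : ℕ => (n : ℝ)⁻¹ * bS S f n (S x)) atTop (nhds (fs x)) := by
    filter_upwards [hS.quasiMeasurePreserving.ae hfsae] with x hx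
    rw [← hfsinv x]
    exact hx
  have hconv2 : ∀ᵐ x ∂P,
      Tendsto (fun n : ℕ => (n : ℝ)⁻¹ * bS T fs n (T x)) atTop (nhds (fss x)) := by
    filter_upwards [hT.quasiMeasurePreserving.ae hfssae] with x hx
    rw [← hfssinv x]
    exact hx
  -- Birkhoff limits for the tail-sup functions
  have hKex : ∀ N : ℕ, ∃ K : X → ℝ, Measurable K ∧ (∀ x, |K x| ≤ 2 * C) ∧
      (∀ x, K (T x) = K x) ∧ ((∀ x, 0 ≤ Hf S f fs N x) → ∀ x, 0 ≤ K x) ∧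
      (∫ x, K x ∂P = ∫ x, Hf S f fs N x ∂P) ∧
      ∀ᵐ x ∂P, Tendsto (fun n : ℕ => (n : ℝ)⁻¹ * bS T (Hf S f fs N) n x) atTop (nhds (K x)) :=
    fun N => birkhoff_core P hT (Hf_measurable hS.measurable hf hfsmeas N)
      (Hf_abs_le hC hfsabs N)
  choose K hKmeas hKabs hKinv hKnn hKint hKae using hKex
  have hKnonneg : ∀ N x, 0 ≤ K N x := fun N => hKnn N (fun y => Hf_nonneg S f fs N y)
  -- the integrals of Hf N tend to 0
  have hHint : Tendsto (fun N => ∫ y, Hf S f fs N y ∂P) atTop (nhds 0) := by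
    have h0 : nhds (0 : ℝ) = nhds (∫ _ : X, (0:ℝ) ∂P) := by simp
    rw [h0]
    refine tendsto_integral_of_dominated_convergence (fun _ => 2 * C)
      (fun N => (Hf_measurable hS.measurable hf hfsmeas N).aestronglyMeasurable)
      (integrable_const _)
      (fun N => Eventually.of_forall fun y => by
        rw [Real.norm_eq_abs]; exact Hf_abs_le hC hfsabs N y) ?_
    filter_upwards [hconv1] with y hy
    exact Hf_tendsto_zero hy
  have hKint0 : Tendsto (fun N => ∫ x, K N x ∂P) atTop (nhds 0) :=
    hHint.congr fun N => (hKint N).symm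
  -- choose good indices
  have hNkex : ∀ k : ℕ, ∃ N, ∫ x, K N x ∂P < (4⁻¹ : ℝ) ^ k := by
    intro k
    have hpos : (0:ℝ) < (4⁻¹ : ℝ) ^ k := by positivity
    exact (hKint0.eventually_lt_const hpos).exists
  choose Nk hNkint using hNkex
  -- Borel-Cantelli
  have hsbound : ∀ k : ℕ,
      P {x | (2⁻¹:ℝ) ^ k ≤ K (Nk k) x} ≤ ENNReal.ofReal ((2⁻¹:ℝ) ^ k) := by
    intro k
    have hmarkov := mul_meas_ge_le_integral_of_nonneg
      (Eventually.of_forall (fun x => hKnonneg (Nk k) x))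
      (integrable_of_bound P (hKmeas (Nk k)) _ (hKabs (Nk k))) ((2⁻¹:ℝ) ^ k)
    have hppos : (0:ℝ) < (2⁻¹:ℝ) ^ k := by positivity
    have h4 : (4⁻¹:ℝ) ^ k = (2⁻¹:ℝ) ^ k * (2⁻¹:ℝ) ^ k := by
      rw [← mul_pow]; norm_num
    have h2 : ((2⁻¹:ℝ) ^ k) * (P {x | (2⁻¹:ℝ) ^ k ≤ K (Nk k) x}).toReal
        ≤ ((2⁻¹:ℝ) ^ k) * ((2⁻¹:ℝ) ^ k) := by
      rw [← h4]
      exact hmarkov.trans (le_of_lt (hNkint k))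
    have h3 : (P {x | (2⁻¹:ℝ) ^ k ≤ K (Nk k) x}).toReal ≤ (2⁻¹:ℝ) ^ k :=
      le_of_mul_le_mul_left h2 hppos
    calc P {x | (2⁻¹:ℝ) ^ k ≤ K (Nk k) x}
        = ENNReal.ofReal (P {x | (2⁻¹:ℝ) ^ k ≤ K (Nk k) x}).toReal :=
          (ENNReal.ofReal_toReal (measure_ne_top P _)).symm
      _ ≤ ENNReal.ofReal ((2⁻¹:ℝ) ^ k) := ENNReal.ofReal_le_ofReal h3
  have hsum : (∑' k : ℕ, P {x | (2⁻¹:ℝ) ^ k ≤ K (Nk k) x}) ≠ ⊤ := by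
    have h1 : (∑' k : ℕ, P {x | (2⁻¹:ℝ) ^ k ≤ K (Nk k) x})
        ≤ ∑' k : ℕ, ENNReal.ofReal ((2⁻¹:ℝ) ^ k) := ENNReal.tsum_le_tsum hsbound
    have h2 : (∑' k : ℕ, ENNReal.ofReal ((2⁻¹:ℝ) ^ k))
        = ∑' k : ℕ, (ENNReal.ofReal (2⁻¹:ℝ)) ^ k := by
      congr 1
      funext k
      exact ENNReal.ofReal_pow (by norm_num) k
    rw [h2, ENNReal.tsum_geometric] at h1
    refine ne_top_of_le_ne_top ?_ h1
    rw [Ne, ENNReal.inv_eq_top]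
    have hlt : ENNReal.ofReal (2⁻¹:ℝ) < 1 := by
      rw [← ENNReal.ofReal_one]
      exact ENNReal.ofReal_lt_ofReal_iff_of_nonneg (by norm_num) |>.2 (by norm_num)
    exact (tsub_pos_of_lt hlt).ne'
  have hfin : ∀ᵐ x ∂P, {k : ℕ | x ∈ {x | (2⁻¹:ℝ) ^ k ≤ K (Nk k) x}}.Finite :=
    ae_finite_setOf_mem hsum
  have hconv3 : ∀ᵐ x ∂P, ∀ k : ℕ,
      Tendsto (fun n : ℕ => (n : ℝ)⁻¹ * bS T (Hf S f fs (Nk k)) n (T x)) atTop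
        (nhds (K (Nk k) x)) := by
    rw [ae_all_iff]
    intro k
    filter_upwards [hT.quasiMeasurePreserving.ae (hKae (Nk k))] with x hx
    rw [← hKinv (Nk k) x]
    exact hx
  -- final assembly
  filter_upwards [hconv1, hconv2, hconv3, hfin] with x h1 h2 h3 h4
  have hicc1 : (fun n : ℕ => (n : ℝ)⁻¹ * ∑ i ∈ Finset.Icc 1 n, f (S^[i] x))
      = fun n : ℕ => (n : ℝ)⁻¹ * bS S f n (S x) := by
    funext n
    rw [sum_Icc_shift]
  have hicc2 : (fun n : ℕ => (n : ℝ)⁻¹ * ∑ j ∈ Finset.Icc 1 n, fs (T^[j] x))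
      = fun n : ℕ => (n : ℝ)⁻¹ * bS T fs n (T x) := by
    funext n
    rw [sum_Icc_shift]
  refine ⟨by rw [hicc1]; exact h1, by rw [hicc2]; exact h2, ?_⟩
  -- third limit
  have hB : Tendsto (fun n : ℕ => (n : ℝ)⁻¹ * bS T fs n (T x)) atTop (nhds (fss x)) := h2
  have hDB : Tendsto (fun n : ℕ =>
      ((n : ℝ)⁻¹ * ∑ j ∈ Finset.Icc 1 n,
        (n : ℝ)⁻¹ * ∑ i ∈ Finset.Icc 1 n, f (S^[i] (T^[j] x)))
      - (n : ℝ)⁻¹ * bS T fs n (T x)) atTop (nhds 0) := by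
    rw [NormedAddCommGroup.tendsto_nhds_zero]
    intro ε hε
    obtain ⟨m, hm⟩ : ∃ m : ℕ, ∀ k : ℕ, (2⁻¹:ℝ) ^ k ≤ K (Nk k) x → k ≤ m := by
      rcases h4.bddAbove with ⟨m, hm⟩
      exact ⟨m, fun k hk => hm hk⟩
    obtain ⟨k₀, hk₀⟩ := exists_pow_lt_of_lt_one (by linarith : (0:ℝ) < ε / 2)
      (by norm_num : (2⁻¹:ℝ) < 1)
    set k := max k₀ (m + 1) with hk
    have hxk : ¬ (2⁻¹:ℝ) ^ k ≤ K (Nk k) x := by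
      intro hmem
      have := hm k hmem
      have : m + 1 ≤ m := le_trans (le_max_right k₀ (m + 1)) this
      omega
    have hKlt : K (Nk k) x < ε := by
      have h5 : K (Nk k) x < (2⁻¹:ℝ) ^ k := lt_of_not_ge hxk
      have h6 : ((2⁻¹:ℝ)) ^ k ≤ (2⁻¹:ℝ) ^ k₀ :=
        pow_le_pow_of_le_one (by norm_num) (by norm_num) (le_max_left _ _)
      linarith
    filter_upwards [(h3 k).eventually_lt_const hKlt, eventually_ge_atTop (Nk k)]
      with n hn1 hn2
    rw [Real.norm_eq_abs]
    have hD : ((n : ℝ)⁻¹ * ∑ j ∈ Finset.Icc 1 n,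
          (n : ℝ)⁻¹ * ∑ i ∈ Finset.Icc 1 n, f (S^[i] (T^[j] x)))
        - (n : ℝ)⁻¹ * bS T fs n (T x)
        = (n : ℝ)⁻¹ * ∑ j ∈ Finset.Icc 1 n, df S f fs n (T^[j] x) := by
      rw [← sum_Icc_shift fs T n x, ← mul_sub, ← Finset.sum_sub_distrib]
      refine congrArg _ (Finset.sum_congr rfl fun j _ => ?_)
      rw [df, sum_Icc_shift f S n (T^[j] x)]
    rw [hD]
    have hbound : |(n : ℝ)⁻¹ * ∑ j ∈ Finset.Icc 1 n, df S f fs n (T^[j] x)|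
        ≤ (n : ℝ)⁻¹ * bS T (Hf S f fs (Nk k)) n (T x) := by
      rw [← sum_Icc_shift (Hf S f fs (Nk k)) T n x]
      rw [abs_mul, abs_inv, Nat.abs_cast]
      refine mul_le_mul_of_nonneg_left ?_ (by positivity)
      calc |∑ j ∈ Finset.Icc 1 n, df S f fs n (T^[j] x)|
          ≤ ∑ j ∈ Finset.Icc 1 n, |df S f fs n (T^[j] x)| :=
            Finset.abs_sum_le_sum_abs _ _
        _ ≤ ∑ j ∈ Finset.Icc 1 n, Hf S f fs (Nk k) (T^[j] x) :=
            Finset.sum_le_sum fun j _ => df_le_Hf hC hfsabs hn2 _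
    exact lt_of_le_of_lt hbound hn1
  have hfinal := hDB.add hB
  rw [zero_add] at hfinal
  refine hfinal.congr fun n => ?_
  ring
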